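/- Let L be a lattice of dimension n ≥ 5 and maximal index 2, with sublattice L₀ of index 2 generated by n independent minimal vectors e₁,…,eₙ, and e = (e₁+⋯+eₙ)/2 ∈ L. Then there exist at most four indices i such that e − eᵢ is a minimal vector of L. -/

import Mathlib

open Finset

noncomputable section

/-- The ambient Euclidean space of dimension `n`. -/
abbrev Euc (n : ℕ) := EuclideanSpace ℝ (Fin n)

/-- `x` is a minimal (shortest nonzero) vector of the lattice `L`. -/
def IsMinVec {n : ℕ} (L : Submodule ℤ (Euc n)) (x : Euc n) : Prop :=
  x ∈ L ∧ x ≠ 0 ∧ ∀ y ∈ L, y ≠ 0 → ‖x‖ ≤ ‖y‖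

/-- The standing setting of the paper: a lattice `L` of dimension `n` together with
`n` linearly independent minimal vectors `e₁, …, eₙ`. -/
structure LatticeSetup (n : ℕ) where
  L : Submodule ℤ (Euc n)
  e : Fin n → Euc n
  indep : LinearIndependent ℤ e
  e_min : ∀ i, IsMinVec L (e i)

/-- The sublattice `L₀ = ⟨e₁,…,eₙ⟩`. -/
def LatticeSetup.L0 {n : ℕ} (S : LatticeSetup n) : Submodule ℤ (Euc n) :=
  Submodule.span ℤ (Set.range S.e)

/-- The vector `e = (e₁ + ⋯ + eₙ)/2`. -/
def LatticeSetup.eVec {n : ℕ} (S : LatticeSetup n) : Euc n :=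
  (1/2 : ℝ) • ∑ i, S.e i

/-- `L₀` has index `2` in `L`, and `L = ⟨L₀, e⟩` with `e = (e₁+⋯+eₙ)/2`. -/
def LatticeSetup.Index2 {n : ℕ} (S : LatticeSetup n) : Prop :=
  S.eVec ∈ S.L ∧ S.eVec ∉ S.L0 ∧ S.L = S.L0 ⊔ Submodule.span ℤ {S.eVec}

/-- Every sublattice of `L` spanned by `n` independent minimal vectors has
index at most `2` in `L` (i.e. the maximal index of `L` is at most `2`). -/
def LatticeSetup.MaxIndexLE2 {n : ℕ} (S : LatticeSetup n) : Prop :=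
  ∀ v : Fin n → Euc n, (∀ i, IsMinVec S.L (v i)) → LinearIndependent ℤ v →
    (Submodule.span ℤ (Set.range v)).toAddSubgroup.relIndex S.L.toAddSubgroup ≤ 2

/-- The length of `L` equals `n`: every linearly independent set `X` of minimal
vectors with `∑_{x∈X} x ≡ 0 mod 2L` has cardinality `n`. -/
def LatticeSetup.LengthEq {n : ℕ} (S : LatticeSetup n) : Prop :=
  ∀ X : Finset (Euc n), (∀ x ∈ X, IsMinVec S.L x) →
    LinearIndependent ℤ (Subtype.val : {y // y ∈ X} → Euc n) →
    (∃ y ∈ S.L, ∑ x ∈ X, x = (2 : ℤ) • y) → X.card = n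

/-- The standing hypotheses: maximal index `2` (attained by `L₀`) and length `n`. -/
def LatticeSetup.Standing {n : ℕ} (S : LatticeSetup n) : Prop :=
  S.Index2 ∧ S.MaxIndexLE2 ∧ S.LengthEq

/-- The vector `x_I = e - ∑_{i ∈ I} eᵢ`. -/
def LatticeSetup.xI {n : ℕ} (S : LatticeSetup n) (I : Finset (Fin n)) : Euc n :=
  S.eVec - ∑ i ∈ I, S.e i

/-- The weight of an index `i` relative to a family `I₁,…,I_r` of index sets. -/
def wt {n r : ℕ} (I : Fin r → Finset (Fin n)) (i : Fin n) : ℕ :=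
  (Finset.univ.filter fun k => i ∈ I k).card

/-- The weight of an index relative to a triple of index sets. -/
def wt3 {n : ℕ} (I1 I2 I3 : Finset (Fin n)) (i : Fin n) : ℕ :=
  (if i ∈ I1 then 1 else 0) + (if i ∈ I2 then 1 else 0) + (if i ∈ I3 then 1 else 0)

/-- The relation `∼` relative to a family: `I_k ∼ I_k'` iff `I_k ∩ I_k'` contains an
index of weight `2`. -/
def simF {n r : ℕ} (I : Fin r → Finset (Fin n)) (k k' : Fin r) : Prop :=
  ∃ i ∈ I k ∩ I k', wt I i = 2

/-- A triple of index sets forms a `3`-cycle for `∼` (weights relative to the triple). -/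
def Cycle3 {n : ℕ} (I1 I2 I3 : Finset (Fin n)) : Prop :=
  (∃ i ∈ I1 ∩ I2, wt3 I1 I2 I3 i = 2) ∧ (∃ i ∈ I2 ∩ I3, wt3 I1 I2 I3 i = 2) ∧
    (∃ i ∈ I1 ∩ I3, wt3 I1 I2 I3 i = 2)

/-- The family `F` contains no `3`-cycle for the relation `∼`. -/
def NoCycle3 {n : ℕ} (F : Finset (Finset (Fin n))) : Prop :=
  ∀ I1 ∈ F, ∀ I2 ∈ F, ∀ I3 ∈ F, I1 ≠ I2 → I2 ≠ I3 → I1 ≠ I3 → ¬ Cycle3 I1 I2 I3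

/-- A lattice is perfect if the projections `x xᵀ`, `x` minimal, span the space of
symmetric matrices. -/
def IsPerfect {n : ℕ} (L : Submodule ℤ (Euc n)) : Prop :=
  Submodule.span ℝ ((fun x : Euc n => Matrix.of fun i j => x i * x j) ''
      {x | IsMinVec L x}) =
    Submodule.span ℝ {A : Matrix (Fin n) (Fin n) ℝ | A.IsSymm}

/-- at most four minimal vectors of type 1. -/
theorem stmt1 (n : ℕ) (hn : 5 ≤ n) (S : LatticeSetup n)
    (h2 : S.Index2) (hmax : S.MaxIndexLE2) :
    {i : Fin n | IsMinVec S.L (S.eVec - S.e i)}.ncard ≤ 4 := by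
  classical
  by_contra hcon
  push_neg at hcon
  set T : Set (Fin n) := {i : Fin n | IsMinVec S.L (S.eVec - S.e i)} with hT
  have hfin : T.Finite := Set.toFinite T
  have h5 : 5 ≤ hfin.toFinset.card := by
    rw [← Set.ncard_eq_toFinset_card T hfin]; omega
  obtain ⟨K, hKT, hK5⟩ := Finset.exists_subset_card_eq h5
  have hKmin : ∀ i ∈ K, IsMinVec S.L (S.eVec - S.e i) := by
    intro i hi
    have := hKT hi
    rwa [Set.Finite.mem_toFinset] at this
  -- the modified family
  set v : Fin n → Euc n := fun i => if i ∈ K then S.eVec - S.e i else S.e i with hv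
  have hvmin : ∀ i, IsMinVec S.L (v i) := by
    intro i
    by_cases hi : i ∈ K
    · simpa [hv, hi] using hKmin i hi
    · simpa [hv, hi] using S.e_min i
  -- rational coordinates
  have hQindep : LinearIndependent ℚ S.e := (LinearIndependent.iff_fractionRing ℤ ℚ).mp S.indep
  have hgex : ∀ i : Fin n, ∃ g : Euc n →ₗ[ℚ] ℚ,
      ∀ j, g (S.e j) = if j = i then 1 else 0 := by
    intro i
    obtain ⟨g, hgc⟩ := LinearMap.exists_extend ((Module.Basis.span hQindep).coord i)
    refine ⟨g, fun j => ?_⟩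
    have hj : S.e j ∈ Submodule.span ℚ (Set.range S.e) := Submodule.subset_span ⟨j, rfl⟩
    have h1 : g (S.e j) = (Module.Basis.span hQindep).coord i ⟨S.e j, hj⟩ :=
      LinearMap.congr_fun hgc ⟨S.e j, hj⟩
    have h2' : (⟨S.e j, hj⟩ : Submodule.span ℚ (Set.range S.e)) = Module.Basis.span hQindep j :=
      (Module.Basis.span_apply hQindep j).symm
    rw [h1, h2', Module.Basis.coord_apply, Module.Basis.repr_self, Finsupp.single_apply]
  choose g hg using hgex
  have h2e : S.eVec + S.eVec = ∑ j, S.e j := by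
    rw [LatticeSetup.eVec, ← two_smul ℝ, smul_smul]
    norm_num
  have hge : ∀ i, g i S.eVec = 1/2 := by
    intro i
    have h1 : g i S.eVec + g i S.eVec = ∑ j, g i (S.e j) := by
      rw [← map_add, h2e, map_sum]
    simp only [hg] at h1
    rw [Finset.sum_ite_eq' Finset.univ i (fun _ => (1:ℚ))] at h1
    simp at h1
    linarith
  have hgv : ∀ i k, g i (v k) =
      if k ∈ K then (1/2 : ℚ) - (if k = i then 1 else 0) else (if k = i then 1 else 0) := by
    intro i k
    by_cases hk : k ∈ K <;> simp [hv, hk, hge, hg]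
  -- linear independence of v
  have hvind : LinearIndependent ℤ v := by
    rw [Fintype.linearIndependent_iff]
    intro c hc
    have hq : ∀ i, ∑ k, (c k : ℚ) * g i (v k) = 0 := by
      intro i
      have h1 := congrArg (g i) hc
      rw [map_sum, map_zero] at h1
      simpa [zsmul_eq_mul] using h1
    set s : ℚ := ∑ k ∈ K, (c k : ℚ) with hs
    have key : ∀ i, s/2 + (if i ∈ K then -(c i:ℚ) else (c i:ℚ)) = 0 := by
      intro i
      have h := hq i
      simp only [hgv] at h
      have hterm : ∀ k, (c k:ℚ) *
          (if k ∈ K then (1/2 : ℚ) - (if k = i then 1 else 0) else (if k = i then 1 else 0))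
          = (if k ∈ K then (c k:ℚ)/2 else 0)
            + (if k = i then (if k ∈ K then -(c k:ℚ) else (c k:ℚ)) else 0) := by
        intro k; split_ifs <;> ring
      rw [Finset.sum_congr rfl fun k _ => hterm k, Finset.sum_add_distrib,
        Finset.sum_ite_mem, Finset.univ_inter,
        Finset.sum_ite_eq' Finset.univ i] at h
      simp only [Finset.mem_univ, if_true] at h
      rw [← Finset.sum_div] at h
      exact h
    have hcK : ∀ i ∈ K, (c i : ℚ) = s/2 := by
      intro i hi
      have := key i
      rw [if_pos hi] at this
      linarith
    have hs0 : s = 0 := by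
      have h1 : s = ∑ i ∈ K, (s/2) := hs.trans (Finset.sum_congr rfl hcK)
      rw [Finset.sum_const, hK5, nsmul_eq_mul] at h1
      push_cast at h1
      linarith
    intro i
    have hcast : (c i : ℚ) = 0 := by
      by_cases hi : i ∈ K
      · rw [hcK i hi, hs0]; norm_num
      · have := key i
        rw [if_neg hi, hs0] at this
        linarith
    exact_mod_cast hcast
  -- the functional u
  set u : Euc n →ₗ[ℚ] ℚ := ∑ i ∈ K, (2:ℚ) • g i with hu
  have huapp : ∀ x, u x = ∑ i ∈ K, 2 * g i x := by
    intro x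
    rw [hu, LinearMap.sum_apply]
    exact Finset.sum_congr rfl fun i _ => by simp
  have hue : ∀ j, u (S.e j) = if j ∈ K then 2 else 0 := by
    intro j
    rw [huapp]
    simp only [hg, mul_ite, mul_one, mul_zero]
    rw [Finset.sum_ite_eq K j (fun _ => (2:ℚ))]
  have hueV : u S.eVec = 5 := by
    rw [huapp]
    simp only [hge]
    rw [Finset.sum_const, hK5, nsmul_eq_mul]
    norm_num
  have huv : ∀ k, u (v k) = if k ∈ K then 3 else 0 := by
    intro k
    by_cases hk : k ∈ K <;> simp [hv, hk, hueV, hue] <;> norm_num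
  have hux : ∀ (a : Fin n → ℤ) (b : ℤ),
      u (∑ i, a i • S.e i + b • S.eVec) = ((2 * ∑ i ∈ K, a i + 5 * b : ℤ) : ℚ) := by
    intro a b
    rw [map_add, map_sum, map_zsmul, hueV, zsmul_eq_mul]
    have hterm : ∀ i, u (a i • S.e i) = (if i ∈ K then (a i : ℚ) * 2 else 0) := by
      intro i
      rw [map_zsmul, hue]
      split_ifs <;> simp [zsmul_eq_mul]
    rw [Finset.sum_congr rfl fun i _ => hterm i, Finset.sum_ite_mem, Finset.univ_inter,
      ← Finset.sum_mul]
    push_cast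
    ring
  -- decomposition of elements of L
  have hdecomp : ∀ x ∈ S.L, ∃ (a : Fin n → ℤ) (b : ℤ), x = ∑ i, a i • S.e i + b • S.eVec := by
    intro x hx
    rw [h2.2.2, Submodule.mem_sup] at hx
    obtain ⟨y, hy, z, hz, rfl⟩ := hx
    rw [LatticeSetup.L0] at hy
    obtain ⟨a, ha⟩ := (Submodule.mem_span_range_iff_exists_fun ℤ).mp hy
    obtain ⟨b, hb⟩ := Submodule.mem_span_singleton.mp hz
    exact ⟨a, b, by rw [← ha, ← hb]⟩
  -- the sublattice M
  set M : Submodule ℤ (Euc n) := Submodule.span ℤ (Set.range v) with hM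
  have hML : M ≤ S.L := by
    rw [hM, Submodule.span_le]
    rintro _ ⟨k, rfl⟩
    exact (hvmin k).1
  have hsplit : ∑ k ∈ K, S.e k + ∑ k ∈ Kᶜ, S.e k = S.eVec + S.eVec := by
    rw [Finset.sum_add_sum_compl, ← h2e]
  have h3e : (3:ℤ) • S.eVec = ∑ k ∈ K, v k - ∑ k ∈ Kᶜ, v k := by
    have h1 : ∑ k ∈ K, v k = (5:ℕ) • S.eVec - ∑ k ∈ K, S.e k := by
      rw [Finset.sum_congr rfl (fun k hk => show v k = S.eVec - S.e k from by
        rw [hv]; exact if_pos hk), Finset.sum_sub_distrib, Finset.sum_const, hK5]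
    have h2' : ∑ k ∈ Kᶜ, v k = ∑ k ∈ Kᶜ, S.e k :=
      Finset.sum_congr rfl (fun k hk => by
        rw [hv]; exact if_neg (Finset.mem_compl.mp hk))
    rw [h1, h2', sub_sub, hsplit]
    module
  have hMe3 : (3:ℤ) • S.eVec ∈ M := by
    rw [h3e]
    exact sub_mem (Submodule.sum_mem _ fun k _ => Submodule.subset_span ⟨k, rfl⟩)
      (Submodule.sum_mem _ fun k _ => Submodule.subset_span ⟨k, rfl⟩)
  have hmemM : ∀ (a : Fin n → ℤ) (b : ℤ), (3:ℤ) ∣ (∑ i ∈ K, a i + b) →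
      ∑ i, a i • S.e i + b • S.eVec ∈ M := by
    intro a b hdvd
    obtain ⟨m, hm⟩ := hdvd
    have hx : ∑ i, a i • S.e i + b • S.eVec
        = (∑ i ∈ K, a i • (S.e i - S.eVec)) + (∑ i ∈ Kᶜ, a i • S.e i)
          + m • ((3:ℤ) • S.eVec) := by
      have hR1 : ∑ i ∈ K, a i • (S.e i - S.eVec)
          = ∑ i ∈ K, a i • S.e i - (∑ i ∈ K, a i) • S.eVec := by
        rw [Finset.sum_smul, ← Finset.sum_sub_distrib]
        exact Finset.sum_congr rfl fun i _ => smul_sub _ _ _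
      have hR2 : m • ((3:ℤ) • S.eVec) = (∑ i ∈ K, a i + b) • S.eVec := by
        rw [smul_smul, show m * 3 = ∑ i ∈ K, a i + b from by omega]
      rw [hR1, hR2, ← Finset.sum_add_sum_compl K (fun i => a i • S.e i), add_smul]
      abel
    rw [hx]
    refine add_mem (add_mem (Submodule.sum_mem _ fun i hi => ?_)
      (Submodule.sum_mem _ fun i hi => ?_)) (Submodule.smul_mem _ _ hMe3)
    · have hvi : S.e i - S.eVec = -(v i) := by rw [hv]; simp [hi]
      rw [hvi]
      exact Submodule.smul_mem _ _ (neg_mem (Submodule.subset_span ⟨i, rfl⟩))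
    · have hvi : S.e i = v i := by rw [hv]; exact (if_neg (Finset.mem_compl.mp hi)).symm
      rw [hvi]
      exact Submodule.smul_mem _ _ (Submodule.subset_span ⟨i, rfl⟩)
  -- integrality of u on L
  have hIntD : ∀ x : S.L.toAddSubgroup, ∃ mz : ℤ, u (x : Euc n) = (mz : ℚ) := by
    intro x
    obtain ⟨a, b, hab⟩ := hdecomp x x.2
    exact ⟨_, by rw [hab, hux]⟩
  -- the homomorphism to ZMod 3
  set θ : S.L.toAddSubgroup →+ ZMod 3 := AddMonoidHom.mk'
      (fun x => ((⌊u (x : Euc n)⌋ : ℤ) : ZMod 3)) (by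
    intro x y
    obtain ⟨m1, hm1⟩ := hIntD x
    obtain ⟨m2, hm2⟩ := hIntD y
    have hxy : u ((x + y : S.L.toAddSubgroup) : Euc n) = ((m1 + m2 : ℤ) : ℚ) := by
      push_cast
      rw [map_add, hm1, hm2]
    show ((⌊u ((x + y : S.L.toAddSubgroup) : Euc n)⌋ : ℤ) : ZMod 3)
        = ((⌊u (x : Euc n)⌋ : ℤ) : ZMod 3) + ((⌊u (y : Euc n)⌋ : ℤ) : ZMod 3)
    rw [hxy, hm1, hm2, Int.floor_intCast, Int.floor_intCast, Int.floor_intCast]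
    push_cast
    ring) with hθdef
  have hθ : ∀ (x : S.L.toAddSubgroup) (mz : ℤ), u (x : Euc n) = (mz : ℚ) →
      θ x = ((mz : ℤ) : ZMod 3) := by
    intro x mz hm
    show ((⌊u (x : Euc n)⌋ : ℤ) : ZMod 3) = _
    rw [hm, Int.floor_intCast]
  -- kernel of θ is M
  have hker : θ.ker = M.toAddSubgroup.addSubgroupOf S.L.toAddSubgroup := by
    ext x
    simp only [AddMonoidHom.mem_ker, AddSubgroup.mem_addSubgroupOf]
    constructor
    · intro hx0
      obtain ⟨a, b, hab⟩ := hdecomp x x.2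
      have hval : θ x = ((2 * ∑ i ∈ K, a i + 5 * b : ℤ) : ZMod 3) :=
        hθ x _ (by rw [hab]; exact hux a b)
      rw [hval] at hx0
      have h3 : ((3:ℕ) : ℤ) ∣ (2 * ∑ i ∈ K, a i + 5 * b) := by
        rwa [ZMod.intCast_zmod_eq_zero_iff_dvd] at hx0
      have h3' : (3:ℤ) ∣ (∑ i ∈ K, a i + b) := by
        push_cast at h3
        omega
      show (x : Euc n) ∈ M
      rw [hab]
      exact hmemM a b h3'
    · intro hxM
      obtain ⟨c, hc⟩ := (Submodule.mem_span_range_iff_exists_fun ℤ).mp hxM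
      have hval : u (x : Euc n) = ((3 * ∑ k ∈ K, c k : ℤ) : ℚ) := by
        rw [← hc, map_sum]
        have hterm : ∀ k, u (c k • v k) = (if k ∈ K then (c k : ℚ) * 3 else 0) := by
          intro k
          rw [map_zsmul, huv]
          split_ifs <;> simp [zsmul_eq_mul]
        rw [Finset.sum_congr rfl fun k _ => hterm k, Finset.sum_ite_mem, Finset.univ_inter,
          ← Finset.sum_mul]
        push_cast
        ring
      rw [hθ x _ hval]
      rw [ZMod.intCast_zmod_eq_zero_iff_dvd]
      push_cast
      exact ⟨∑ k ∈ K, c k, rfl⟩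
  -- surjectivity of θ
  have heL : S.eVec ∈ S.L.toAddSubgroup := h2.1
  have hθe : θ ⟨S.eVec, heL⟩ = ((5:ℤ) : ZMod 3) := hθ _ 5 (by exact_mod_cast hueV)
  have hsurj : Function.Surjective θ := by
    intro y
    refine ⟨(2 * (y.val : ℤ)) • ⟨S.eVec, heL⟩, ?_⟩
    rw [map_zsmul, hθe, zsmul_eq_mul]
    have hyv : (((y.val : ℤ) : ℤ) : ZMod 3) = y := by
      push_cast
      exact ZMod.natCast_rightInverse y
    push_cast
    push_cast at hyv
    rw [hyv]
    rw [show ((2:ZMod 3) * y) * 5 = 10 * y from by ring,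
      show (10 : ZMod 3) = 1 from by decide, one_mul]
  -- compute the relative index
  have hidx := hmax v hvmin hvind
  have hrel : (Submodule.span ℤ (Set.range v)).toAddSubgroup.relIndex S.L.toAddSubgroup = 3 := by
    have h1 : (Submodule.span ℤ (Set.range v)).toAddSubgroup.relIndex S.L.toAddSubgroup
        = θ.ker.index := by
      rw [hker]
      rfl
    rw [h1, AddSubgroup.index_ker, AddMonoidHom.range_eq_top.mpr hsurj,
      AddSubgroup.card_top, Nat.card_zmod]
  rw [hrel] at hidx
  omega
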